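/- Suppose X1 = A·Z0 + B·U0. Let F_des ⊆ ℝ^{n×s} be binding and assume F_att^data ∩ F_des = ∅. If K ∈ ℝ^{m×s} satisfies A + B·K ∈ F_des, then there exist matrices Ā ∈ ℝ^{n×s} and B̄ ∈ ℝ^{n×m} consistent with the data, i.e. X1 = Ā·Z0 + B̄·U0, such that Ā + B̄·K ∉ F_des. -/

import Mathlib

open Matrix

/-- Column space of a matrix: the range of the linear map `x ↦ M x`. -/
def imCol {p q : Type*} [Fintype q] (M : Matrix p q ℝ) : Submodule ℝ (p → ℝ) :=
  LinearMap.range M.mulVecLin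

/-- `F_att^data = {F : im [F; I_s] ⊆ im [X1; Z0]}`. -/
def FattData (n s N : ℕ) (X1 : Matrix (Fin n) (Fin N) ℝ) (Z0 : Matrix (Fin s) (Fin N) ℝ) :
    Set (Matrix (Fin n) (Fin s) ℝ) :=
  {F | imCol (Matrix.fromRows F (1 : Matrix (Fin s) (Fin s) ℝ)) ≤
        imCol (Matrix.fromRows X1 Z0)}

lemma vecMulVec_mul' {n p q : Type*} [Fintype p] (w : n → ℝ) (u : p → ℝ)
    (M : Matrix p q ℝ) : Matrix.vecMulVec w u * M = Matrix.vecMulVec w (u ᵥ* M) := by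
  ext i j
  simp [Matrix.vecMulVec_apply, Matrix.mul_apply, Matrix.vecMul, dotProduct,
    Finset.mul_sum, mul_assoc]

/-- If `F_des` is binding, `F_att^data ∩ F_des = ∅`, and `A + B K ∈ F_des`, then there are
`Ā, B̄` consistent with the data (`X1 = Ā Z0 + B̄ U0`) such that `Ā + B̄ K ∉ F_des`. -/
theorem stmt10 (n m s N : ℕ) (hn : 1 ≤ n)
    (A : Matrix (Fin n) (Fin s) ℝ) (B : Matrix (Fin n) (Fin m) ℝ)
    (X1 : Matrix (Fin n) (Fin N) ℝ) (Z0 : Matrix (Fin s) (Fin N) ℝ)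
    (U0 : Matrix (Fin m) (Fin N) ℝ)
    (hdata : X1 = A * Z0 + B * U0)
    (Fdes : Set (Matrix (Fin n) (Fin s) ℝ))
    (hbind : ∀ F ∈ Fdes, ∀ v : Fin s → ℝ, v ≠ 0 →
      ∃ w : Fin n → ℝ, F + Matrix.vecMulVec w v ∉ Fdes)
    (hempty : FattData n s N X1 Z0 ∩ Fdes = ∅)
    (K : Matrix (Fin m) (Fin s) ℝ) (hK : A + B * K ∈ Fdes) :
    ∃ (Abar : Matrix (Fin n) (Fin s) ℝ) (Bbar : Matrix (Fin n) (Fin m) ℝ),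
      X1 = Abar * Z0 + Bbar * U0 ∧ Abar + Bbar * K ∉ Fdes := by
  set F := A + B * K with hF
  -- F is not data-attested
  have hFnot : F ∉ FattData n s N X1 Z0 := by
    intro h
    exact Set.eq_empty_iff_forall_notMem.mp hempty F ⟨h, hK⟩
  rw [FattData, Set.mem_setOf_eq] at hFnot
  obtain ⟨y, hy, hyn⟩ := SetLike.not_le_iff_exists.mp hFnot
  obtain ⟨x, rfl⟩ := hy
  -- separating functional
  obtain ⟨φ, hφx, hφbot⟩ := Submodule.exists_dual_map_eq_bot_of_notMem hyn inferInstance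
  have hφzero : ∀ z ∈ imCol (Matrix.fromRows X1 Z0), φ z = 0 := by
    intro z hz
    have : φ z ∈ (imCol (Matrix.fromRows X1 Z0)).map φ := ⟨z, hz, rfl⟩
    rw [hφbot] at this
    simpa using this
  -- the representing vector of φ
  set η : (Fin n ⊕ Fin s) → ℝ := fun i => φ (fun j => if i = j then 1 else 0) with hη
  have key : ∀ z : (Fin n ⊕ Fin s) → ℝ, φ z = ∑ i, z i * η i := by
    intro z
    rw [LinearMap.pi_apply_eq_sum_univ]
    simp [hη, smul_eq_mul]
  have hrep : ∀ {q : Type} [Fintype q] (M : Matrix (Fin n ⊕ Fin s) q ℝ) (u : q → ℝ),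
      φ (M.mulVec u) = (η ᵥ* M) ⬝ᵥ u := by
    intro q _ M u
    rw [key]
    simp only [Matrix.mulVec, Matrix.vecMul, dotProduct, Finset.sum_mul,
      Finset.mul_sum]
    rw [Finset.sum_comm]
    congr 1; ext j; congr 1; ext i; ring
  set η₁ : Fin n → ℝ := η ∘ Sum.inl
  set η₂ : Fin s → ℝ := η ∘ Sum.inr
  have hηelim : η = Sum.elim η₁ η₂ := by
    funext i; cases i <;> rfl
  -- kernel condition
  have hker : η₁ ᵥ* X1 + η₂ ᵥ* Z0 = 0 := by
    funext j
    have hcol : (Matrix.fromRows X1 Z0).mulVec (Pi.single j 1) ∈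
        imCol (Matrix.fromRows X1 Z0) := ⟨Pi.single j 1, rfl⟩
    have := hφzero _ hcol
    rw [hrep, hηelim, sumElim_vecMul_fromRows, dotProduct_single, mul_one] at this
    simpa using this
  -- v ≠ 0
  have hφx' : (η₁ ᵥ* F + η₂) ⬝ᵥ x ≠ 0 := by
    have := hφx
    rw [Matrix.mulVecLin_apply, hrep, hηelim, sumElim_vecMul_fromRows,
      Matrix.vecMul_one] at this
    exact this
  set v : Fin s → ℝ := η₁ ᵥ* F + η₂ with hv
  have hvne : v ≠ 0 := by
    intro h
    apply hφx'
    rw [hv] at h ⊢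
    rw [h]
    simp [dotProduct]
  obtain ⟨w, hw⟩ := hbind F hK v hvne
  refine ⟨A + Matrix.vecMulVec w (η₁ ᵥ* A + η₂), B + Matrix.vecMulVec w (η₁ ᵥ* B), ?_, ?_⟩
  · rw [Matrix.add_mul, Matrix.add_mul, vecMulVec_mul', vecMulVec_mul']
    have hz : (η₁ ᵥ* A + η₂) ᵥ* Z0 + (η₁ ᵥ* B) ᵥ* U0 = 0 := by
      rw [Matrix.add_vecMul, Matrix.vecMul_vecMul, Matrix.vecMul_vecMul, ← hker]
      rw [hdata, Matrix.vecMul_add]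
      abel
    have : Matrix.vecMulVec w ((η₁ ᵥ* A + η₂) ᵥ* Z0) +
        Matrix.vecMulVec w ((η₁ ᵥ* B) ᵥ* U0) = 0 := by
      ext i j
      have h2 := congrFun hz j
      simp only [Pi.add_apply, Pi.zero_apply] at h2
      simp only [Matrix.add_apply, Matrix.vecMulVec_apply, Matrix.zero_apply]
      rw [← mul_add, h2, mul_zero]
    calc X1 = X1 + 0 := by rw [add_zero]
    _ = A * Z0 + B * U0 + (Matrix.vecMulVec w ((η₁ ᵥ* A + η₂) ᵥ* Z0) +
        Matrix.vecMulVec w ((η₁ ᵥ* B) ᵥ* U0)) := by rw [← hdata, this]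
    _ = _ := by abel
  · have heq : A + Matrix.vecMulVec w (η₁ ᵥ* A + η₂) +
        (B + Matrix.vecMulVec w (η₁ ᵥ* B)) * K = F + Matrix.vecMulVec w v := by
      rw [Matrix.add_mul, vecMulVec_mul', hv, hF]
      have : η₁ ᵥ* F + η₂ = (η₁ ᵥ* A + η₂) + (η₁ ᵥ* B) ᵥ* K := by
        rw [hF, Matrix.vecMul_add, Matrix.vecMul_vecMul]
        abel
      rw [this]
      have hsplit : Matrix.vecMulVec w ((η₁ ᵥ* A + η₂) + (η₁ ᵥ* B) ᵥ* K) =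
          Matrix.vecMulVec w (η₁ ᵥ* A + η₂) + Matrix.vecMulVec w ((η₁ ᵥ* B) ᵥ* K) := by
        ext i j
        simp [Matrix.vecMulVec_apply, mul_add]
      rw [hsplit]
      abel
    rw [heq]
    exact hw
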